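/- Let K be a field with more than 2 elements and I a non-empty subset of {1,...,n}. Let V_I be the space of upper triangular n×n matrices whose diagonal entries at positions in I are all equal and whose diagonal entries at positions outside I are zero. Let φ: V_I → K be a linear form such that for every M in V_I with a nonzero eigenvalue λ in K, φ(M) ∈ {0, λ}. Then either φ = 0, or φ(M) equals the common diagonal entry of M at positions of I, for all M in V_I. -/
import Mathlib

/-- Membership in `V_I = K·D_I ⊕ NT_n(K)`: upper triangular, diagonal entries outside `I`
are zero, diagonal entries at positions of `I` are all equal. -/
def memVI {K : Type*} [Field K] {n : ℕ} (I : Set (Fin n))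
    (M : Matrix (Fin n) (Fin n) K) : Prop :=
  (∀ i j : Fin n, j < i → M i j = 0) ∧ (∀ i : Fin n, i ∉ I → M i i = 0) ∧
    (∀ i ∈ I, ∀ j ∈ I, M i i = M j j)

open Polynomial in
lemma root_of_memVI {K : Type*} [Field K] {n : ℕ} {I : Set (Fin n)}
    {M : Matrix (Fin n) (Fin n) K} (hM : memVI I M) {i₀ : Fin n} (hi₀ : i₀ ∈ I) :
    (Matrix.charpoly M).IsRoot (M i₀ i₀) := by
  have htri : M.BlockTriangular id := by
    intro i j h
    exact hM.1 i j h
  rw [Matrix.charpoly_of_upperTriangular M htri]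
  simp only [Polynomial.IsRoot, Polynomial.eval_prod, Polynomial.eval_sub,
    Polynomial.eval_X, Polynomial.eval_C]
  exact Finset.prod_eq_zero (Finset.mem_univ i₀) (by ring)

lemma exists_ne_ne {K : Type*} [Field K] (hK : (2 : Cardinal) < Cardinal.mk K)
    (x y : K) : ∃ c : K, c ≠ x ∧ c ≠ y := by
  by_contra h
  push_neg at h
  have huniv : (Set.univ : Set K) = {x, y} := by
    ext c; simp only [Set.mem_univ, true_iff, Set.mem_insert_iff, Set.mem_singleton_iff]
    rcases eq_or_ne c x with h'|h'
    · exact Or.inl h'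
    · exact Or.inr (h c h')
  have : Cardinal.mk K ≤ 2 := by
    calc Cardinal.mk K = Cardinal.mk (Set.univ : Set K) := Cardinal.mk_univ.symm
    _ = Cardinal.mk ({x, y} : Set K) := by rw [huniv]
    _ ≤ Cardinal.mk ({y} : Set K) + 1 := Cardinal.mk_insert_le
    _ = 1 + 1 := by rw [Cardinal.mk_singleton]
    _ = 2 := one_add_one_eq_two
  exact absurd hK (not_lt.mpr this)

/-- Linear form lemma, type (I). -/
theorem stmt10 {K : Type*} [Field K] (hK : (2 : Cardinal) < Cardinal.mk K)
    (n : ℕ) (I : Set (Fin n)) (hI : I.Nonempty)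
    (φ : Matrix (Fin n) (Fin n) K →ₗ[K] K)
    (hφ : ∀ M : Matrix (Fin n) (Fin n) K, memVI I M →
      ∀ lam : K, lam ≠ 0 → (Matrix.charpoly M).IsRoot lam → (φ M = 0 ∨ φ M = lam)) :
    (∀ M : Matrix (Fin n) (Fin n) K, memVI I M → φ M = 0) ∨
      (∀ M : Matrix (Fin n) (Fin n) K, memVI I M → ∀ i ∈ I, φ M = M i i) := by
  classical
  obtain ⟨i₀, hi₀⟩ := hI
  -- the "identity on I" matrix D
  set D : Matrix (Fin n) (Fin n) K :=
    Matrix.of (fun i j => if i = j ∧ i ∈ I then (1 : K) else 0) with hD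
  have hDmem : memVI I D := by
    refine ⟨fun i j h => ?_, fun i h => ?_, fun i hi j hj => ?_⟩
    · simp only [hD, Matrix.of_apply]
      rw [if_neg]; rintro ⟨rfl, -⟩; exact lt_irrefl _ h
    · simp only [hD, Matrix.of_apply]
      rw [if_neg]; rintro ⟨-, h'⟩; exact h h'
    · simp [hD, hi, hj]
  have hDdiag : ∀ i ∈ I, D i i = 1 := fun i hi => by simp [hD, hi]
  -- key: φ vanishes on elements of V_I whose diagonal on I vanishes
  have key : ∀ N : Matrix (Fin n) (Fin n) K, memVI I N → N i₀ i₀ = 0 → φ N = 0 := by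
    intro N hN hN0
    by_contra hb
    obtain ⟨c, hc1, hc2⟩ := exists_ne_ne hK ((0 - φ D) / φ N) ((1 - φ D) / φ N)
    have hNdiag : ∀ i ∈ I, N i i = 0 := fun i hi => (hN.2.2 i hi i₀ hi₀).trans hN0
    have hmem : memVI I (D + c • N) := by
      refine ⟨fun i j h => ?_, fun i h => ?_, fun i hi j hj => ?_⟩
      · simp [hDmem.1 i j h, hN.1 i j h]
      · simp [hDmem.2.1 i h, hN.2.1 i h]
      · simp [Matrix.add_apply, hDdiag i hi, hDdiag j hj, hNdiag i hi, hNdiag j hj]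
    have hdiag : (D + c • N) i₀ i₀ = 1 := by
      simp [Matrix.add_apply, hDdiag i₀ hi₀, hNdiag i₀ hi₀]
    have hroot := root_of_memVI hmem hi₀
    rw [hdiag] at hroot
    have := hφ _ hmem 1 one_ne_zero hroot
    rw [map_add, map_smul, smul_eq_mul] at this
    rcases this with h | h
    · exact hc1 (by field_simp; linear_combination h)
    · exact hc2 (by field_simp; linear_combination h)
  -- φ D is 0 or 1
  have hDroot : (Matrix.charpoly D).IsRoot 1 := by
    have := root_of_memVI hDmem hi₀; rwa [hDdiag i₀ hi₀] at this
  have ha := hφ D hDmem 1 one_ne_zero hDroot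
  -- decomposition of a general element
  have hdec : ∀ M : Matrix (Fin n) (Fin n) K, memVI I M → φ M = M i₀ i₀ * φ D := by
    intro M hM
    have hNmem : memVI I (M - M i₀ i₀ • D) := by
      refine ⟨fun i j h => ?_, fun i h => ?_, fun i hi j hj => ?_⟩
      · simp [hM.1 i j h, hDmem.1 i j h]
      · simp [hM.2.1 i h, hDmem.2.1 i h]
      · simp [Matrix.sub_apply, hDdiag i hi, hDdiag j hj, hM.2.2 i hi j hj]
    have hN0 : (M - M i₀ i₀ • D) i₀ i₀ = 0 := by
      simp [Matrix.sub_apply, hDdiag i₀ hi₀]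
    have := key _ hNmem hN0
    rw [map_sub, map_smul, smul_eq_mul, sub_eq_zero] at this
    exact this
  rcases ha with ha | ha
  · left
    intro M hM
    rw [hdec M hM, ha, mul_zero]
  · right
    intro M hM i hi
    rw [hdec M hM, ha, mul_one]
    exact hM.2.2 i₀ hi₀ i hi
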